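/- Let D be a Dedekind domain that is not a field, O an order in D, and f the conductor of O in D. Let g ∈ Cl(O) and suppose that the set of prime ideals p of O coprime to f whose class in Cl(O) equals g is infinite (all such p are invertible as fractional ideals of O). Then for every prime ideal p of O coprime to f with class g, the class h = [p·D] ∈ Cl(D) (which depends only on g) contains infinitely many nonzero prime ideals of D coprime to f; that is, the set of nonzero prime ideals P of D with P + f = D and class h is infinite. -/

import Mathlib

open scoped nonZeroDivisors

/-- The conductor `f = {a ∈ D | a·D ⊆ O}` of a subring `O` of `D`, as an ideal of `D`. -/
def conductorIdeal {D : Type*} [CommRing D] (O : Subring D) : Ideal D where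
  carrier := {a | ∀ d : D, a * d ∈ O}
  add_mem' := by
    intro a b ha hb d
    simpa [add_mul] using O.add_mem (ha d) (hb d)
  zero_mem' := by
    intro d
    simpa using O.zero_mem
  smul_mem' := by
    intro c a ha d
    have h := ha (c * d)
    have e : c • a * d = a * (c * d) := by rw [smul_eq_mul]; ring
    rw [e]; exact h

/-- The conductor of the subring `O` of `D`, viewed as an ideal of `O`
(the conductor is contained in `O`). -/
def conductorIdealO {D : Type*} [CommRing D] (O : Subring D) : Ideal O :=
  (conductorIdeal O).comap O.subtype

/-- `O` is an order in the Dedekind domain `D`: a subring such that the fraction field of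
`D` is also a fraction field of `O` (every element is a quotient of two elements of `O`)
and such that `D` is a finitely generated `O`-module. -/
def Subring.IsOrder {D : Type*} [CommRing D] [IsDomain D] (O : Subring D) : Prop :=
  (∀ x : FractionRing D, ∃ a b : O,
      b ≠ 0 ∧ x = algebraMap D (FractionRing D) a / algebraMap D (FractionRing D) b) ∧
    Module.Finite O D

section Aux

variable {D : Type*} [CommRing D] (O : Subring D)

lemma mem_conductorIdeal_iff {a : D} : a ∈ conductorIdeal O ↔ ∀ d : D, a * d ∈ O :=
  Iff.rfl

/-- Multiplying an element of `p·D` by an element of the conductor lands in `p`. -/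
lemma conductor_mul_mem (p : Ideal O) {y : D} (hy : y ∈ p.map O.subtype) :
    ∀ c ∈ conductorIdeal O, ∃ h : y * c ∈ O, (⟨y * c, h⟩ : O) ∈ p := by
  have hy' : y ∈ Ideal.span (O.subtype '' (p : Set O)) := hy
  clear hy
  induction hy' using Submodule.span_induction with
  | mem x hx =>
    obtain ⟨q, hq, rfl⟩ := hx
    intro c hc
    have hcO : c ∈ O := by simpa using hc 1
    have h : (O.subtype q) * c ∈ O := O.mul_mem q.2 hcO
    refine ⟨h, ?_⟩
    have : (⟨O.subtype q * c, h⟩ : O) = q * ⟨c, hcO⟩ := by ext; rfl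
    rw [this]
    exact p.mul_mem_right _ hq
  | zero =>
    intro c hc
    refine ⟨by simpa using O.zero_mem, ?_⟩
    have : (⟨(0 : D) * c, by simpa using O.zero_mem⟩ : O) = 0 := by ext; simp
    rw [this]; exact p.zero_mem
  | add x y hx hy ihx ihy =>
    intro c hc
    obtain ⟨h1, hm1⟩ := ihx c hc
    obtain ⟨h2, hm2⟩ := ihy c hc
    have e : (x + y) * c = x * c + y * c := add_mul x y c
    rw [e]
    refine ⟨O.add_mem h1 h2, ?_⟩
    have : (⟨x * c + y * c, O.add_mem h1 h2⟩ : O) = ⟨x * c, h1⟩ + ⟨y * c, h2⟩ := by ext; rfl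
    rw [this]; exact p.add_mem hm1 hm2
  | smul d x hx ih =>
    intro c hc
    have e : (d • x) * c = x * (d * c) := by rw [smul_eq_mul]; ring
    rw [e]
    exact ih (d * c) ((conductorIdeal O).mul_mem_left d hc)

/-- For an ideal `p` of `O` coprime to the conductor, `p·D ∩ O = p`. -/
lemma comap_map_of_coprime (p : Ideal O) (hcop : p ⊔ conductorIdealO O = ⊤) :
    (p.map O.subtype).comap O.subtype = p := by
  refine le_antisymm ?_ Ideal.le_comap_map
  intro x hx
  have h1 : (1 : O) ∈ p ⊔ conductorIdealO O := hcop ▸ Submodule.mem_top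
  obtain ⟨a, ha, c, hc, hac⟩ := Submodule.mem_sup.mp h1
  have hxD : O.subtype x ∈ p.map O.subtype := hx
  obtain ⟨h, hm⟩ := conductor_mul_mem O p hxD (c : D) hc
  have hxc : x * c = ⟨(O.subtype x) * (c : D), h⟩ := by ext; rfl
  have : x = x * a + x * c := by rw [← mul_add, hac, mul_one]
  rw [this]
  exact p.add_mem (p.mul_mem_left x ha) (hxc ▸ hm)

variable {O} in
/-- Every element of `D` is congruent mod `p·D` to an element of `O`,
when `p` is coprime to the conductor. -/
lemma exists_congr_mem (p : Ideal O) (hcop : p ⊔ conductorIdealO O = ⊤) (d : D) :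
    ∃ d' : O, d - (d' : D) ∈ p.map O.subtype := by
  have h1 : (1 : O) ∈ p ⊔ conductorIdealO O := hcop ▸ Submodule.mem_top
  obtain ⟨a, ha, c, hc, hac⟩ := Submodule.mem_sup.mp h1
  have hcd : (c : D) * d ∈ O := hc d
  refine ⟨⟨(c : D) * d, hcd⟩, ?_⟩
  have e : d - (c : D) * d = (a : D) * d := by
    have : ((a : O) : D) + ((c : O) : D) = 1 := by
      have := congrArg (O.subtype) hac; simpa using this
    calc d - (c : D) * d = (1 - (c : D)) * d := by ring
    _ = (a : D) * d := by rw [← this]; ring_nf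
  rw [Subtype.coe_mk, e]
  exact (p.map O.subtype).mul_mem_right d (Ideal.mem_map_of_mem O.subtype ha)

/-- The extension of a prime coprime to the conductor is prime. -/
lemma map_isPrime (p : Ideal O) (hp : p.IsPrime) (hcop : p ⊔ conductorIdealO O = ⊤) :
    (p.map O.subtype).IsPrime := by
  constructor
  · intro htop
    have := comap_map_of_coprime O p hcop
    rw [htop, Ideal.comap_top] at this
    exact hp.ne_top this.symm
  · intro x y hxy
    obtain ⟨x', hx'⟩ := exists_congr_mem p hcop x
    obtain ⟨y', hy'⟩ := exists_congr_mem p hcop y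
    have hx'y' : (x' : D) * (y' : D) ∈ p.map O.subtype := by
      have e : (x' : D) * (y' : D) =
          x * y - (x - x') * y - x' * (y - y') := by ring
      rw [e]
      exact Submodule.sub_mem _ (Submodule.sub_mem _ hxy
        ((p.map O.subtype).mul_mem_right y hx'))
        ((p.map O.subtype).mul_mem_left (x' : D) hy')
    have : x' * y' ∈ p := by
      rw [← comap_map_of_coprime O p hcop]
      exact hx'y'
    rcases hp.mem_or_mem this with h | h
    · left
      have : x = (x - x') + (x' : D) := by ring
      rw [this]
      exact (p.map O.subtype).add_mem hx' (Ideal.mem_map_of_mem O.subtype h)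
    · right
      have : y = (y - y') + (y' : D) := by ring
      rw [this]
      exact (p.map O.subtype).add_mem hy' (Ideal.mem_map_of_mem O.subtype h)

/-- The extension of an ideal coprime to the conductor is coprime to the conductor. -/
lemma map_coprime (p : Ideal O) (hcop : p ⊔ conductorIdealO O = ⊤) :
    p.map O.subtype ⊔ conductorIdeal O = ⊤ := by
  rw [Ideal.eq_top_iff_one]
  have h1 : (1 : O) ∈ p ⊔ conductorIdealO O := hcop ▸ Submodule.mem_top
  obtain ⟨a, ha, c, hc, hac⟩ := Submodule.mem_sup.mp h1
  have : (1 : D) = (a : D) + (c : D) := by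
    have := congrArg (O.subtype) hac; simpa using this.symm
  rw [this]
  exact Submodule.add_mem _ (Ideal.mem_sup_left (Ideal.mem_map_of_mem O.subtype ha))
    (Ideal.mem_sup_right hc)

end Aux

set_option maxHeartbeats 1000000 in
set_option synthInstance.maxHeartbeats 200000 in
/-- **Lemma 4.1(2).** Let `O` be an order in a Dedekind domain `D` with conductor `f`, and
let `g ∈ Cl(O)` be a class containing infinitely many (invertible) prime ideals of `O`
coprime to `f`. Then for every prime `p` of `O` coprime to `f` with class `g`, the class
`h = [p·D] ∈ Cl(D)` contains infinitely many nonzero prime ideals of `D` coprime to `f`. -/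
theorem infinitely_many_primes_in_extended_class {D : Type*} [CommRing D]
    [IsDedekindDomain D] (hD : ¬ IsField D) (O : Subring D) (hO : O.IsOrder)
    (g : ClassGroup O)
    (hg : {p : Ideal O | p.IsPrime ∧ p ⊔ conductorIdealO O = ⊤ ∧
      ∃ hp : IsUnit ((p : Ideal O) : FractionalIdeal (↥O)⁰ (FractionRing ↥O)),
        ClassGroup.mk (FractionRing ↥O) hp.unit = g}.Infinite) :
    ∀ p : Ideal O, p.IsPrime → p ⊔ conductorIdealO O = ⊤ →
      (∃ hp : IsUnit ((p : Ideal O) : FractionalIdeal (↥O)⁰ (FractionRing ↥O)),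
        ClassGroup.mk (FractionRing ↥O) hp.unit = g) →
      ∀ hm : p.map O.subtype ∈ (Ideal D)⁰,
        {P : (Ideal D)⁰ | (P : Ideal D).IsPrime ∧ (P : Ideal D) ⊔ conductorIdeal O = ⊤ ∧
          ClassGroup.mk0 P = ClassGroup.mk0 ⟨p.map O.subtype, hm⟩}.Infinite := by
  intro p hp hcop hex hm
  obtain ⟨hpu, hpg⟩ := hex
  classical
  set S : Set (Ideal O) := {q : Ideal O | q.IsPrime ∧ q ⊔ conductorIdealO O = ⊤ ∧
      ∃ hq : IsUnit ((q : Ideal O) : FractionalIdeal (↥O)⁰ (FractionRing ↥O)),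
        ClassGroup.mk (FractionRing ↥O) hq.unit = g} with hS
  -- extensions of elements of S are nonzero
  have hne : ∀ q ∈ S, q.map O.subtype ∈ (Ideal D)⁰ := by
    rintro q ⟨hq, hqcop, hqu, -⟩
    rw [mem_nonZeroDivisors_iff_ne_zero]
    intro h0
    have : ((q : Ideal O).map O.subtype).comap O.subtype = q :=
      comap_map_of_coprime O q hqcop
    rw [h0, Ideal.zero_eq_bot, Ideal.comap_bot_of_injective O.subtype Subtype.coe_injective]
      at this
    have hq0 : q = ⊥ := this.symm
    obtain ⟨u, hu⟩ := hqu
    have h01 : ((q : Ideal O) : FractionalIdeal (↥O)⁰ (FractionRing ↥O)) * ↑u⁻¹ = 1 := by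
      rw [← hu]; exact u.mul_inv
    rw [hq0] at h01
    simp at h01
  -- the map from S into nonzero ideals of D
  set φ : Ideal O → (Ideal D)⁰ := fun q =>
    if h : q.map O.subtype ∈ (Ideal D)⁰ then ⟨q.map O.subtype, h⟩ else 1 with hφ
  have hφS : ∀ q ∈ S, (φ q : Ideal D) = q.map O.subtype := by
    intro q hq
    rw [hφ]; simp only [dif_pos (hne q hq)]
  have hinj : Set.InjOn φ S := by
    intro q₁ h₁ q₂ h₂ heq
    have e : q₁.map O.subtype = q₂.map O.subtype := by
      rw [← hφS q₁ h₁, ← hφS q₂ h₂, heq]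
    rw [← comap_map_of_coprime O q₁ h₁.2.1, ← comap_map_of_coprime O q₂ h₂.2.1, e]
  refine Set.Infinite.mono ?_ (hg.image hinj)
  rintro P ⟨q, hqS, rfl⟩
  obtain ⟨hq, hqcop, hqu, hqg⟩ := hqS
  have hPval : (φ q : Ideal D) = q.map O.subtype := hφS q ⟨hq, hqcop, hqu, hqg⟩
  refine ⟨?_, ?_, ?_⟩
  · rw [hPval]; exact map_isPrime O q hq hqcop
  · rw [hPval]; exact map_coprime O q hqcop
  · -- class group equality
    have hmk : ClassGroup.mk (FractionRing ↥O) hqu.unit = ClassGroup.mk (FractionRing ↥O) hpu.unit := hqg.trans hpg.symm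
    rw [ClassGroup.mk_eq_mk_of_coe_ideal hqu.unit_spec hpu.unit_spec] at hmk
    obtain ⟨x, y, hx, hy, hxy⟩ := hmk
    have hface : Ideal.span {(x : D)} * q.map O.subtype
        = Ideal.span {(y : D)} * p.map O.subtype := by
      have := congrArg (Ideal.map O.subtype) hxy
      rwa [Ideal.map_mul, Ideal.map_mul, Ideal.map_span, Ideal.map_span,
        Set.image_singleton, Set.image_singleton] at this
    have : ClassGroup.mk0 (φ q) = ClassGroup.mk0 ⟨p.map O.subtype, hm⟩ := by
      rw [ClassGroup.mk0_eq_mk0_iff]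
      refine ⟨(x : D), (y : D), ?_, ?_, ?_⟩
      · simpa using hx
      · simpa using hy
      · rw [hPval]; exact hface
    exact this
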